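/- Let A : X → Y and B : Y → X be bounded operators between Banach spaces and let λ ≠ 0. Then AB − λ is Fredholm if and only if BA − λ is Fredholm; hence the essential spectra of AB and BA coincide away from 0. -/

import Mathlib

lemma isClosed_range_of_finCodim {E F : Type*} [NormedAddCommGroup E] [NormedSpace ℂ E]
    [CompleteSpace E] [NormedAddCommGroup F] [NormedSpace ℂ F] [CompleteSpace F]
    (f : E →L[ℂ] F) (h : FiniteDimensional ℂ (F ⧸ LinearMap.range (f : E →ₗ[ℂ] F))) :
    IsClosed (Set.range f) := by
  obtain ⟨M, hM⟩ := Submodule.exists_isCompl (LinearMap.range (f : E →ₗ[ℂ] F))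
  haveI : FiniteDimensional ℂ M :=
    LinearEquiv.finiteDimensional (Submodule.quotientEquivOfIsCompl _ _ hM)
  haveI : CompleteSpace M := FiniteDimensional.complete ℂ M
  set g : E × M →L[ℂ] F :=
    f.comp (ContinuousLinearMap.fst ℂ E M) + M.subtypeL.comp (ContinuousLinearMap.snd ℂ E M)
    with hg
  have surj : Function.Surjective g := by
    intro y
    have hy : y ∈ LinearMap.range (f : E →ₗ[ℂ] F) ⊔ M := by rw [hM.sup_eq_top]; trivial
    obtain ⟨a, ha, b, hb, rfl⟩ := Submodule.mem_sup.1 hy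
    obtain ⟨x, rfl⟩ := ha
    exact ⟨(x, ⟨b, hb⟩), rfl⟩
  have hopen : IsOpenMap g := g.isOpenMap surj
  have hquot : Topology.IsQuotientMap g := hopen.isQuotientMap g.continuous surj
  rw [← hquot.isClosed_preimage]
  have : g ⁻¹' (Set.range f) = {p : E × M | p.2 = 0} := by
    ext ⟨x, m⟩
    simp only [Set.mem_preimage, Set.mem_setOf_eq, hg, ContinuousLinearMap.add_apply,
      ContinuousLinearMap.comp_apply, ContinuousLinearMap.coe_fst', ContinuousLinearMap.coe_snd',
      Submodule.coe_subtypeL', Submodule.coe_subtype]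
    constructor
    · rintro ⟨z, hz⟩
      have hmr : (m : F) ∈ LinearMap.range (f : E →ₗ[ℂ] F) := by
        have : (m : F) = f z - f x := by rw [hz]; abel
        rw [this]
        exact Submodule.sub_mem _ (LinearMap.mem_range_self (f : E →ₗ[ℂ] F) z) (LinearMap.mem_range_self (f : E →ₗ[ℂ] F) x)
      have : (m : F) = 0 := by
        have := hM.disjoint.le_bot ⟨hmr, m.2⟩
        simpa using this
      exact Subtype.ext this
    · rintro rfl
      exact ⟨x, by simp⟩
  rw [this]
  exact isClosed_eq continuous_snd continuous_const


lemma fred_transfer {X Y : Type*} [NormedAddCommGroup X] [NormedSpace ℂ X] [CompleteSpace X]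
    [NormedAddCommGroup Y] [NormedSpace ℂ Y] [CompleteSpace Y]
    (A : X →L[ℂ] Y) (B : Y →L[ℂ] X) (l : ℂ) (hl : l ≠ 0)
    (hk : FiniteDimensional ℂ (LinearMap.ker (((B.comp A - l • (1 : X →L[ℂ] X) : X →L[ℂ] X) : X →ₗ[ℂ] X))))
    (hc : FiniteDimensional ℂ (X ⧸ LinearMap.range (((B.comp A - l • (1 : X →L[ℂ] X) : X →L[ℂ] X) : X →ₗ[ℂ] X)))) :
    FiniteDimensional ℂ (LinearMap.ker (((A.comp B - l • (1 : Y →L[ℂ] Y) : Y →L[ℂ] Y) : Y →ₗ[ℂ] Y))) ∧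
    FiniteDimensional ℂ (Y ⧸ LinearMap.range (((A.comp B - l • (1 : Y →L[ℂ] Y) : Y →L[ℂ] Y) : Y →ₗ[ℂ] Y))) := by
  set S : X →L[ℂ] X := B.comp A - l • (1 : X →L[ℂ] X) with hS
  set T : Y →L[ℂ] Y := A.comp B - l • (1 : Y →L[ℂ] Y) with hT
  have hTapp : ∀ y, T y = A (B y) - l • y := by
    intro y; simp [hT]
  have hSapp : ∀ x, S x = B (A x) - l • x := by
    intro x; simp [hS]
  constructor
  · -- kernel
    have hmap : ∀ y : LinearMap.ker (T : Y →ₗ[ℂ] Y), B (y : Y) ∈ LinearMap.ker (S : X →ₗ[ℂ] X) := by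
      rintro ⟨y, hy⟩
      have hy' : A (B y) = l • y := by
        have := hTapp y
        rw [show T y = 0 from LinearMap.mem_ker.1 hy] at this
        -- 0 = A (B y) - l • y
        have := this.symm
        rw [sub_eq_zero] at this
        exact this
      simp only [LinearMap.mem_ker, ContinuousLinearMap.coe_coe]
      rw [hSapp, hy', map_smul]
      simp
    let φ : LinearMap.ker (T : Y →ₗ[ℂ] Y) →ₗ[ℂ] LinearMap.ker (S : X →ₗ[ℂ] X) :=
      LinearMap.codRestrict _ ((B : Y →ₗ[ℂ] X).comp (LinearMap.ker (T : Y →ₗ[ℂ] Y)).subtype) hmap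
    have hinj : Function.Injective φ := by
      rintro ⟨y, hy⟩ ⟨y', hy'⟩ hφ
      have hB : B y = B y' := congrArg Subtype.val hφ
      have key : ∀ z ∈ LinearMap.ker (T : Y →ₗ[ℂ] Y), A (B z) = l • z := by
        intro z hz
        have := hTapp z
        rw [show T z = 0 from LinearMap.mem_ker.1 hz] at this
        rw [eq_comm, sub_eq_zero] at this
        exact this
      have : l • y = l • y' := by
        rw [← key y hy, ← key y' hy', hB]
      ext
      exact smul_right_injective Y hl this
    exact FiniteDimensional.of_injective φ hinj
  · -- cokernel
    have hle : LinearMap.range (S : X →ₗ[ℂ] X) ≤ Submodule.comap (A : X →ₗ[ℂ] Y) (LinearMap.range (T : Y →ₗ[ℂ] Y)) := by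
      rintro x ⟨z, rfl⟩
      refine Submodule.mem_comap.2 ⟨A z, ?_⟩
      simp only [ContinuousLinearMap.coe_coe]; rw [hTapp, hSapp]
      simp only [map_sub, map_smul]
    let ψ : (X ⧸ LinearMap.range (S : X →ₗ[ℂ] X)) →ₗ[ℂ] (Y ⧸ LinearMap.range (T : Y →ₗ[ℂ] Y)) :=
      Submodule.mapQ _ _ (A : X →ₗ[ℂ] Y) hle
    have hsurj : Function.Surjective ψ := by
      intro q
      obtain ⟨y, rfl⟩ := Submodule.Quotient.mk_surjective _ q
      refine ⟨Submodule.Quotient.mk (l⁻¹ • B y), ?_⟩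
      have : ψ (Submodule.Quotient.mk (l⁻¹ • B y)) = Submodule.Quotient.mk (A (l⁻¹ • B y)) := rfl
      rw [this]
      rw [Submodule.Quotient.eq]
      have : A (l⁻¹ • B y) - y = l⁻¹ • T y := by
        rw [hTapp, map_smul, smul_sub, smul_smul, inv_mul_cancel₀ hl, one_smul]
      rw [this]
      exact Submodule.smul_mem _ _ (LinearMap.mem_range_self (T : Y →ₗ[ℂ] Y) y)
    exact Module.Finite.of_surjective ψ hsurj



/-- For bounded operators and `λ ≠ 0`, `AB - λ` is Fredholm iff `BA - λ`
is Fredholm; hence the essential spectra of `AB` and `BA` coincide away from `0`. -/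
theorem stmt9 {X Y : Type*} [NormedAddCommGroup X] [NormedSpace ℂ X] [CompleteSpace X]
    [NormedAddCommGroup Y] [NormedSpace ℂ Y] [CompleteSpace Y]
    (A : X →L[ℂ] Y) (B : Y →L[ℂ] X) (l : ℂ) (hl : l ≠ 0) :
    ((IsClosed (Set.range (A.comp B - l • (1 : Y →L[ℂ] Y))) ∧
        FiniteDimensional ℂ (LinearMap.ker (((A.comp B - l • (1 : Y →L[ℂ] Y) : Y →L[ℂ] Y) : Y →ₗ[ℂ] Y))) ∧
        FiniteDimensional ℂ (Y ⧸ LinearMap.range (((A.comp B - l • (1 : Y →L[ℂ] Y) : Y →L[ℂ] Y) : Y →ₗ[ℂ] Y)))) ↔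
      (IsClosed (Set.range (B.comp A - l • (1 : X →L[ℂ] X))) ∧
        FiniteDimensional ℂ (LinearMap.ker (((B.comp A - l • (1 : X →L[ℂ] X) : X →L[ℂ] X) : X →ₗ[ℂ] X))) ∧
        FiniteDimensional ℂ (X ⧸ LinearMap.range (((B.comp A - l • (1 : X →L[ℂ] X) : X →L[ℂ] X) : X →ₗ[ℂ] X))))) ∧
    ({μ : ℂ | ¬ (IsClosed (Set.range (A.comp B - μ • (1 : Y →L[ℂ] Y))) ∧
        FiniteDimensional ℂ (LinearMap.ker (((A.comp B - μ • (1 : Y →L[ℂ] Y) : Y →L[ℂ] Y) : Y →ₗ[ℂ] Y))) ∧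
        FiniteDimensional ℂ (Y ⧸ LinearMap.range (((A.comp B - μ • (1 : Y →L[ℂ] Y) : Y →L[ℂ] Y) : Y →ₗ[ℂ] Y))))} \ {0} =
      {μ : ℂ | ¬ (IsClosed (Set.range (B.comp A - μ • (1 : X →L[ℂ] X))) ∧
        FiniteDimensional ℂ (LinearMap.ker (((B.comp A - μ • (1 : X →L[ℂ] X) : X →L[ℂ] X) : X →ₗ[ℂ] X))) ∧
        FiniteDimensional ℂ (X ⧸ LinearMap.range (((B.comp A - μ • (1 : X →L[ℂ] X) : X →L[ℂ] X) : X →ₗ[ℂ] X))))} \ {0}) := by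
  have main : ∀ (μ : ℂ), μ ≠ 0 →
      ((IsClosed (Set.range (A.comp B - μ • (1 : Y →L[ℂ] Y))) ∧
        FiniteDimensional ℂ (LinearMap.ker (((A.comp B - μ • (1 : Y →L[ℂ] Y) : Y →L[ℂ] Y) : Y →ₗ[ℂ] Y))) ∧
        FiniteDimensional ℂ (Y ⧸ LinearMap.range (((A.comp B - μ • (1 : Y →L[ℂ] Y) : Y →L[ℂ] Y) : Y →ₗ[ℂ] Y)))) ↔
      (IsClosed (Set.range (B.comp A - μ • (1 : X →L[ℂ] X))) ∧
        FiniteDimensional ℂ (LinearMap.ker (((B.comp A - μ • (1 : X →L[ℂ] X) : X →L[ℂ] X) : X →ₗ[ℂ] X))) ∧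
        FiniteDimensional ℂ (X ⧸ LinearMap.range (((B.comp A - μ • (1 : X →L[ℂ] X) : X →L[ℂ] X) : X →ₗ[ℂ] X))))) := by
    intro μ hμ
    constructor
    · rintro ⟨h1, h2, h3⟩
      obtain ⟨k, c⟩ := fred_transfer B A μ hμ h2 h3
      exact ⟨isClosed_range_of_finCodim _ c, k, c⟩
    · rintro ⟨h1, h2, h3⟩
      obtain ⟨k, c⟩ := fred_transfer A B μ hμ h2 h3
      exact ⟨isClosed_range_of_finCodim _ c, k, c⟩
  refine ⟨main l hl, ?_⟩
  ext μ
  simp only [Set.mem_diff, Set.mem_setOf_eq, Set.mem_singleton_iff]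
  constructor
  · rintro ⟨h, hμ⟩
    exact ⟨(not_congr (main μ hμ)).1 h, hμ⟩
  · rintro ⟨h, hμ⟩
    exact ⟨(not_congr (main μ hμ)).2 h, hμ⟩
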